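/- Let A be a local ring with maximal ideal m_A such that the residue field A/m_A has exactly 3 elements. Then H₁(E₂(A),ℤ) ≅ E₂(A)^ab is isomorphic to the additive group A/m_A. -/

import Mathlib

open Matrix

variable (A : Type*) [CommRing A]

/-- The elementary matrix `E₁₂(a) = [[1,a],[0,1]]` as an element of `GL₂(A)`. -/
def E12 (a : A) : GL (Fin 2) A :=
  ⟨!![1, a; 0, 1], !![1, -a; 0, 1],
    by rw [Matrix.mul_fin_two, Matrix.one_fin_two]; ring_nf,
    by rw [Matrix.mul_fin_two, Matrix.one_fin_two]; ring_nf⟩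

/-- The elementary matrix `E₂₁(a) = [[1,0],[a,1]]` as an element of `GL₂(A)`. -/
def E21 (a : A) : GL (Fin 2) A :=
  ⟨!![1, 0; a, 1], !![1, 0; -a, 1],
    by rw [Matrix.mul_fin_two, Matrix.one_fin_two]; ring_nf,
    by rw [Matrix.mul_fin_two, Matrix.one_fin_two]; ring_nf⟩

/-- `E₂(A)`: the subgroup of `GL₂(A)` generated by the elementary matrices. -/
def EE2 : Subgroup (GL (Fin 2) A) :=
  Subgroup.closure (Set.range (E12 A) ∪ Set.range (E21 A))

variable {A}

lemma E12_mem (a : A) : E12 A a ∈ EE2 A :=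
  Subgroup.subset_closure (Or.inl ⟨a, rfl⟩)

lemma E21_mem (a : A) : E21 A a ∈ EE2 A :=
  Subgroup.subset_closure (Or.inr ⟨a, rfl⟩)

variable (A)


-- auxiliary development
section Aux
variable {A}

lemma E12_mul (a b : A) : E12 A a * E12 A b = E12 A (a + b) := by
  ext : 1
  show (!![1,a;0,1] * !![1,b;0,1] : Matrix (Fin 2) (Fin 2) A) = !![1,a+b;0,1]
  rw [Matrix.mul_fin_two]; ring_nf

lemma E12_zero : E12 A (0 : A) = 1 := by
  ext : 1
  show (!![1,0;0,1] : Matrix (Fin 2) (Fin 2) A) = 1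
  rw [Matrix.one_fin_two]

lemma E12_inv (a : A) : (E12 A a)⁻¹ = E12 A (-a) := by
  rw [eq_comm, eq_inv_iff_mul_eq_one, E12_mul, neg_add_cancel, E12_zero]

def W : GL (Fin 2) A := E12 A 1 * E21 A (-1) * E12 A 1

lemma W_mem : (W : GL (Fin 2) A) ∈ EE2 A :=
  mul_mem (mul_mem (E12_mem 1) (E21_mem (-1))) (E12_mem 1)

lemma W_conj (b : A) : W * E12 A (-b) = E21 A b * W := by
  ext : 1
  show (!![1,(1:A);0,1] * !![1,0;-1,1] * !![1,1;0,1]) * !![1,-b;0,1]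
     = !![1,0;b,1] * (!![1,(1:A);0,1] * !![1,0;-1,1] * !![1,1;0,1])
  simp only [Matrix.mul_fin_two]; ring_nf

def DU (u : Aˣ) : GL (Fin 2) A :=
  E12 A u * E21 A (-(u⁻¹ : Aˣ)) * E12 A u * (E12 A (-1) * E21 A 1 * E12 A (-1))

lemma DU_mem (u : Aˣ) : DU u ∈ EE2 A := by
  unfold DU
  exact mul_mem (mul_mem (mul_mem (E12_mem _) (E21_mem _)) (E12_mem _))
    (mul_mem (mul_mem (E12_mem _) (E21_mem _)) (E12_mem _))

lemma DU_val (u : Aˣ) : (DU u : Matrix (Fin 2) (Fin 2) A) = !![(u:A),0;0,((u⁻¹:Aˣ):A)] := by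
  show (!![1,(u:A);0,1] * !![1,0;-((u⁻¹:Aˣ):A),1] * !![1,(u:A);0,1]) *
    (!![1,(-1:A);0,1] * !![1,0;1,1] * !![1,-1;0,1]) = _
  simp only [Matrix.mul_fin_two]
  have h2 : ((u⁻¹:Aˣ):A) * (u:A) = 1 := u.inv_mul
  ext i j; fin_cases i <;> fin_cases j <;> simp

lemma DU_conj (u : Aˣ) (c : A) : DU u * E12 A c = E12 A ((u:A)*(u:A)*c) * DU u := by
  ext : 1
  show (DU u : Matrix (Fin 2) (Fin 2) A) * !![1,c;0,1]
      = !![1,(u:A)*(u:A)*c;0,1] * (DU u : Matrix (Fin 2) (Fin 2) A)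
  rw [DU_val]
  have h1 : (u:A) * ((u⁻¹:Aˣ):A) = 1 := u.mul_inv
  simp only [Matrix.mul_fin_two]
  ext i j; fin_cases i <;> fin_cases j <;> simp <;>
    (first | linear_combination ((u:A)*c)*h1 | linear_combination (-(u:A)*c)*h1)

/-- determinant of everything in `EE2` is `1`. -/
lemma det_of_mem_EE2 {g : GL (Fin 2) A} (hg : g ∈ EE2 A) :
    Matrix.det (g : Matrix (Fin 2) (Fin 2) A) = 1 := by
  induction hg using Subgroup.closure_induction with
  | mem x hx =>
    rcases hx with ⟨a, rfl⟩ | ⟨a, rfl⟩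
    · show Matrix.det !![1,a;0,1] = 1
      simp [Matrix.det_fin_two_of]
    · show Matrix.det !![1,0;a,1] = 1
      simp [Matrix.det_fin_two_of]
  | one => simp
  | mul x y hx hy ihx ihy => rw [Units.val_mul, Matrix.det_mul, ihx, ihy, one_mul]
  | inv x hx ih =>
    have h : (x : Matrix (Fin 2) (Fin 2) A) * ((x⁻¹ : GL (Fin 2) A) : Matrix (Fin 2) (Fin 2) A)
        = 1 := x.mul_inv
    have := congrArg Matrix.det h
    rw [Matrix.det_mul, ih, one_mul, Matrix.det_one] at this
    exact this

/-- `e12 a` as an element of the subgroup. -/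
def e12 (a : A) : EE2 A := ⟨E12 A a, E12_mem a⟩
def e21 (a : A) : EE2 A := ⟨E21 A a, E21_mem a⟩

lemma e12_mul (a b : A) : e12 a * e12 b = e12 (a + b) := by
  apply Subtype.ext; exact E12_mul a b

lemma e12_zero : e12 (0:A) = 1 := by
  apply Subtype.ext; exact E12_zero

open Abelianization in
lemma of_conj (g x : ↥(EE2 A)) : Abelianization.of (g * x * g⁻¹) = Abelianization.of x := by
  rw [_root_.map_mul, _root_.map_mul, map_inv, mul_comm (Abelianization.of g), mul_assoc,
    mul_inv_cancel, mul_one]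

open Abelianization in
lemma of_e21 (b : A) : Abelianization.of (e21 b) = Abelianization.of (e12 (-b)) := by
  have hW : (W : GL (Fin 2) A) ∈ EE2 A := W_mem
  have key : (⟨W, hW⟩ : EE2 A) * e12 (-b) * ⟨W, hW⟩⁻¹ = e21 b := by
    apply Subtype.ext
    show (W : GL (Fin 2) A) * E12 A (-b) * (W⁻¹ : GL (Fin 2) A) = E21 A b
    rw [W_conj, mul_assoc, mul_inv_cancel, mul_one]
  rw [← key, of_conj]

open Abelianization in
lemma of_e12_mem_max {a : A} (hu : IsUnit ((1:A) + a)) (v : Aˣ)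
    (hv : ((2:A) + a) * v = 1) : Abelianization.of (e12 a) = 1 := by
  set u := hu.unit with hu'
  have huv : (u:A) = 1 + a := hu.unit_spec
  have hc : ((u:A) * (u:A)) * (v:A) - (v:A) = a := by
    rw [huv]; linear_combination a * hv
  -- E12 a is a commutator of elements of EE2
  have hDU : DU u ∈ EE2 A := DU_mem u
  set d : EE2 A := ⟨DU u, hDU⟩ with hd
  have key : d * e12 (v:A) * d⁻¹ * (e12 (v:A))⁻¹ = e12 a := by
    apply Subtype.ext
    show DU u * E12 A (v:A) * (DU u)⁻¹ * ((E12 A v)⁻¹ : GL (Fin 2) A) = E12 A a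
    rw [E12_inv, DU_conj, mul_assoc (E12 A _), mul_inv_cancel, mul_one, E12_mul]
    congr 1
    linear_combination hc
  calc Abelianization.of (e12 a) = Abelianization.of (d * e12 (v:A) * d⁻¹ * (e12 (v:A))⁻¹) := by
        rw [key]
    _ = 1 := by
        rw [_root_.map_mul, of_conj, map_inv, mul_inv_cancel]

end Aux

section Phi
variable {A}

def Qp (a b c d : ZMod 3) : Prop := a + d = 0 ∨ (a=1∧b=0∧c=0∧d=1) ∨ (a=2∧b=0∧c=0∧d=2)
instance : ∀ a b c d : ZMod 3, Decidable (Qp a b c d) := fun a b c d => by unfold Qp; infer_instance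
def Fc (a b c d : ZMod 3) : ZMod 3 := if Qp a b c d then 0 else if Qp a (2*a+b) c (2*c+d) then 1 else 2

set_option maxHeartbeats 1000000 in
lemma Fc_hom : ∀ a b c d e f g h : ZMod 3, a*d-b*c = 1 → e*h-f*g=1 →
    Fc (a*e+b*g) (a*f+b*h) (c*e+d*g) (c*f+d*h) = Fc a b c d + Fc e f g h := by decide

lemma Fc_one : Fc 1 0 0 1 = 0 := by decide
lemma Fc_U : Fc 1 1 0 1 = 1 := by decide

/-- reduction of an element of `EE2 A` along a ring hom `r : A →+* ZMod 3`. -/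
def redM (r : A →+* ZMod 3) (x : ↥(EE2 A)) : Matrix (Fin 2) (Fin 2) (ZMod 3) :=
  ((x : GL (Fin 2) A) : Matrix (Fin 2) (Fin 2) A).map r

lemma redM_det (r : A →+* ZMod 3) (x : ↥(EE2 A)) :
    (redM r x) 0 0 * (redM r x) 1 1 - (redM r x) 0 1 * (redM r x) 1 0 = 1 := by
  have h1 : (redM r x).det = 1 := by
    unfold redM
    rw [← RingHom.mapMatrix_apply, ← RingHom.map_det, det_of_mem_EE2 x.2, r.map_one]
  rw [Matrix.det_fin_two] at h1
  exact h1

def fPhi (M : Matrix (Fin 2) (Fin 2) (ZMod 3)) : Multiplicative (ZMod 3) :=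
  Multiplicative.ofAdd (Fc (M 0 0) (M 0 1) (M 1 0) (M 1 1))

lemma fPhi_of (a b c d : ZMod 3) : fPhi !![a,b;c,d] = Multiplicative.ofAdd (Fc a b c d) := rfl

def Phi (r : A →+* ZMod 3) : ↥(EE2 A) →* Multiplicative (ZMod 3) where
  toFun x := fPhi (redM r x)
  map_one' := by
    have h : redM r 1 = 1 := by
      unfold redM
      rw [OneMemClass.coe_one, Units.val_one, ← RingHom.mapMatrix_apply, _root_.map_one]
    show fPhi (redM r 1) = 1
    rw [h, Matrix.one_fin_two, fPhi_of, Fc_one]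
    rfl
  map_mul' x y := by
    have h : redM r (x * y) = redM r x * redM r y := by
      unfold redM
      rw [MulMemClass.coe_mul, Units.val_mul, ← RingHom.mapMatrix_apply, _root_.map_mul,
        RingHom.mapMatrix_apply, RingHom.mapMatrix_apply]
    show fPhi (redM r (x*y)) = fPhi (redM r x) * fPhi (redM r y)
    rw [h]
    show Multiplicative.ofAdd _ = Multiplicative.ofAdd (_ + _)
    congr 1
    have hx := redM_det r x
    have hy := redM_det r y
    simp only [Matrix.mul_apply, Fin.sum_univ_two]
    exact Fc_hom _ _ _ _ _ _ _ _ hx hy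

lemma redM_e12 (r : A →+* ZMod 3) (a : A) : redM r (e12 a) = !![1, r a; 0, 1] := by
  unfold redM e12
  show (!![1,a;0,1] : Matrix (Fin 2) (Fin 2) A).map r = _
  ext i j; fin_cases i <;> fin_cases j <;> simp

lemma Phi_e12_one (r : A →+* ZMod 3) :
    Phi r (e12 (1:A)) = Multiplicative.ofAdd (1 : ZMod 3) := by
  show fPhi (redM r (e12 1)) = _
  rw [redM_e12, r.map_one, fPhi_of, Fc_U]

lemma of_e12_natCast (n : ℕ) :
    Abelianization.of (e12 ((n : A))) = (Abelianization.of (e12 (1:A))) ^ n := by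
  induction n with
  | zero => rw [Nat.cast_zero, e12_zero, _root_.map_one, pow_zero]
  | succ n ih => rw [Nat.cast_succ, ← e12_mul, _root_.map_mul, ih, pow_succ]

end Phi

/-- If `A` is a local ring whose residue field has exactly three elements,
then `H₁(E₂(A), ℤ) ≅ E₂(A)ᵃᵇ` is isomorphic to the additive group `A/m_A`. -/
theorem h1_E2_of_local_residue_card_three
    (A : Type*) [CommRing A] [IsLocalRing A]
    (h : Nat.card (IsLocalRing.ResidueField A) = 3) :
    Nonempty (Additive (Abelianization ↥(EE2 A)) ≃+
      (A ⧸ (IsLocalRing.maximalIdeal A))) := by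
  classical
  haveI : Finite (IsLocalRing.ResidueField A) := Nat.finite_of_card_ne_zero (by omega)
  haveI : Fintype (IsLocalRing.ResidueField A) := Fintype.ofFinite _
  have hcard : Fintype.card (IsLocalRing.ResidueField A) = 3 := by
    rw [← Nat.card_eq_fintype_card]; exact h
  let e : ZMod 3 ≃+* IsLocalRing.ResidueField A := ZMod.ringEquivOfPrime _ (by norm_num) hcard
  let r : A →+* ZMod 3 :=
    (e.symm : IsLocalRing.ResidueField A ≃+* ZMod 3).toRingHom.comp (IsLocalRing.residue A)
  have hrdef : ∀ x : A, r x = e.symm (IsLocalRing.residue A x) := fun x => rfl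
  have hr0 : ∀ x : A, r x = 0 ↔ x ∈ IsLocalRing.maximalIdeal A := by
    intro x
    rw [hrdef]
    constructor
    · intro hx
      have h2 : IsLocalRing.residue A x = 0 := by
        have h3 := congrArg e hx
        rwa [RingEquiv.apply_symm_apply, map_zero] at h3
      exact (Ideal.Quotient.eq_zero_iff_mem).mp h2
    · intro hx
      rw [show IsLocalRing.residue A x = 0 from (Ideal.Quotient.eq_zero_iff_mem).mpr hx, map_zero]
  have hunit : ∀ b : A, r b ≠ 0 → IsUnit b := by
    intro b hb
    by_contra hbu
    exact hb ((hr0 b).mpr ((IsLocalRing.mem_maximalIdeal b).mpr hbu))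
  have hof0 : ∀ b : A, r b = 0 → Abelianization.of (e12 b) = 1 := by
    intro b hb
    have hu : IsUnit ((1:A) + b) := by
      apply hunit
      rw [map_add, hb, r.map_one, add_zero]
      exact one_ne_zero
    have hv : IsUnit ((2:A) + b) := by
      apply hunit
      rw [map_add, hb, add_zero, map_ofNat]
      decide
    exact of_e12_mem_max hu hv.unit⁻¹ (Units.mul_inv_eq_one.mpr hv.unit_spec.symm)
  set t := Abelianization.of (e12 (1:A)) with ht
  have hred : ∀ a : A, Abelianization.of (e12 a) = t ^ ((r a).val) := by
    intro a
    have hn : (((r a).val : ℕ) : ZMod 3) = r a := ZMod.natCast_rightInverse (r a)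
    have hmem : r (a - (((r a).val : ℕ) : A)) = 0 := by
      rw [map_sub, map_natCast, hn, sub_self]
    have h2 : e12 (a - (((r a).val : ℕ) : A)) * e12 ((((r a).val : ℕ) : A)) = e12 a := by
      rw [e12_mul, sub_add_cancel]
    calc Abelianization.of (e12 a)
        = Abelianization.of (e12 (a - (((r a).val : ℕ) : A)) * e12 ((((r a).val : ℕ) : A))) := by
          rw [h2]
      _ = t ^ ((r a).val) := by
          rw [_root_.map_mul, hof0 _ hmem, one_mul, of_e12_natCast]
  have hgen : ∀ g (hg : g ∈ EE2 A), ∃ k : ℤ,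
      Abelianization.of (⟨g, hg⟩ : ↥(EE2 A)) = t ^ k := by
    intro g hg
    induction hg using Subgroup.closure_induction with
    | mem x hx =>
      rcases hx with ⟨a, rfl⟩ | ⟨a, rfl⟩
      · exact ⟨(((r a).val : ℕ) : ℤ), by
          rw [show (⟨E12 A a, _⟩ : ↥(EE2 A)) = e12 a from rfl, hred a, zpow_natCast]⟩
      · exact ⟨(((r (-a)).val : ℕ) : ℤ), by
          rw [show (⟨E21 A a, _⟩ : ↥(EE2 A)) = e21 a from rfl, of_e21, hred (-a), zpow_natCast]⟩
    | one => exact ⟨0, by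
        rw [show (⟨1, _⟩ : ↥(EE2 A)) = 1 from rfl, _root_.map_one, zpow_zero]⟩
    | mul x y hx hy ihx ihy =>
      obtain ⟨k1, h1⟩ := ihx; obtain ⟨k2, h2⟩ := ihy
      exact ⟨k1 + k2, by
        rw [show (⟨x*y, _⟩ : ↥(EE2 A)) = ⟨x, hx⟩ * ⟨y, hy⟩ from rfl, _root_.map_mul, h1, h2,
          _root_.zpow_add]⟩
    | inv x hx ih =>
      obtain ⟨k, hk⟩ := ih
      exact ⟨-k, by
        rw [show (⟨x⁻¹, _⟩ : ↥(EE2 A)) = (⟨x, hx⟩ : ↥(EE2 A))⁻¹ from rfl, map_inv, hk, _root_.zpow_neg]⟩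
  have hofsurj : Function.Surjective
      (Abelianization.of : ↥(EE2 A) → Abelianization ↥(EE2 A)) :=
    QuotientGroup.mk_surjective
  have hgen' : ∀ g : Abelianization ↥(EE2 A), ∃ k : ℤ, g = t ^ k := by
    intro g
    obtain ⟨x, rfl⟩ := hofsurj g
    obtain ⟨k, hk⟩ := hgen x.1 x.2
    exact ⟨k, by rw [← hk]⟩
  have ht3 : t ^ (3:ℕ) = 1 := by
    rw [← of_e12_natCast 3]
    apply hof0
    rw [map_natCast]
    decide
  set Φ := Abelianization.lift (Phi r) with hΦ
  have hΦt : Φ t = Multiplicative.ofAdd (1 : ZMod 3) := by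
    rw [ht, hΦ, Abelianization.lift_apply_of, Phi_e12_one]
  have hΦpow : ∀ k : ℤ, Φ (t ^ k) = Multiplicative.ofAdd ((k : ZMod 3)) := by
    intro k
    rw [map_zpow, hΦt, ← ofAdd_zsmul]
    congr 1
    rw [zsmul_eq_mul, mul_one]
  have ht3' : t ^ (((3:ℕ)) : ℤ) = 1 := by
    rw [zpow_natCast, ht3]
  have hinj : Function.Injective Φ := by
    rw [injective_iff_map_eq_one]
    intro g hg
    obtain ⟨k, rfl⟩ := hgen' g
    rw [hΦpow] at hg
    have hk0 : (k : ZMod 3) = 0 := by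
      have h4 := congrArg Multiplicative.toAdd hg
      simpa using h4
    obtain ⟨m, rfl⟩ := (ZMod.intCast_zmod_eq_zero_iff_dvd k 3).mp hk0
    rw [_root_.zpow_mul, ht3', _root_.one_zpow]
  have hsurjΦ : Function.Surjective Φ := by
    intro y
    refine ⟨t ^ (((Multiplicative.toAdd y).val : ℕ) : ℤ), ?_⟩
    rw [hΦpow]
    have h5 : ((((Multiplicative.toAdd y).val : ℕ) : ℤ) : ZMod 3) = Multiplicative.toAdd y := by
      push_cast
      exact ZMod.natCast_rightInverse _
    rw [h5]
    exact ofAdd_toAdd y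
  exact ⟨(MulEquiv.toAdditiveLeft (MulEquiv.ofBijective Φ ⟨hinj, hsurjΦ⟩)).trans e.toAddEquiv⟩
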